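/- Let ρ(x) = 1/(2π(1−cos x)). The functions o^k(x) = sin(kx) − sin((k−1)x) for k = 1, 2, 3, … form an orthonormal family in the weighted space L²((−π,π), ρ dx): for all j, k ≥ 1, ∫_{−π}^{π} o^j(x) o^k(x) ρ(x) dx = δ_{jk}; moreover this family is total (its closed linear span equals the subspace of odd functions) in the odd part of L²((−π,π), ρ dx). Similarly, the functions e^k(x) = cos(kx) − cos((k+1)x) for k = 0, 1, 2, … satisfy ∫_{−π}^{π} e^j(x) e^k(x) ρ(x) dx = δ_{jk} for all j, k ≥ 0 and form a complete orthonormal basis of the even part of L²((−π,π), ρ dx). -/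

import Mathlib

open Real MeasureTheory Set

/-- The singular weight `ρ(x) = 1/(2π(1 − cos x))` on the circle. -/
noncomputable def rho (x : ℝ) : ℝ := 1 / (2 * π * (1 - Real.cos x))

/-- The odd basis functions `o^k(x) = sin(kx) − sin((k−1)x)`, `k ≥ 1`. -/
noncomputable def obasis (k : ℕ) (x : ℝ) : ℝ :=
  Real.sin ((k:ℝ) * x) - Real.sin (((k:ℝ) - 1) * x)

/-- The even basis functions `e^k(x) = cos(kx) − cos((k+1)x)`, `k ≥ 0`. -/
noncomputable def ebasis (k : ℕ) (x : ℝ) : ℝ :=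
  Real.cos ((k:ℝ) * x) - Real.cos (((k:ℝ) + 1) * x)

lemma one_sub_cos (x : ℝ) : 1 - Real.cos x = 2 * Real.sin (x/2)^2 := by
  have h1 := Real.cos_two_mul (x/2)
  have h2 := Real.sin_sq_add_cos_sq (x/2)
  have h3 : (2:ℝ) * (x/2) = x := by ring
  rw [h3] at h1; linarith

lemma sinhalf_ne {x : ℝ} (h1 : -π < x) (h2 : x ≤ π) (h0 : x ≠ 0) : Real.sin (x/2) ≠ 0 := by
  intro h
  rw [Real.sin_eq_zero_iff_of_lt_of_lt (by linarith [Real.pi_pos]) (by linarith [Real.pi_pos])] at h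
  exact h0 (by linarith)

lemma obasis_eq (k : ℕ) (x : ℝ) :
    Real.sin ((k:ℝ) * x) - Real.sin (((k:ℝ) - 1) * x)
      = 2 * Real.cos (((k:ℝ) - 1/2) * x) * Real.sin (x/2) := by
  rw [Real.sin_sub_sin]
  have h1 : ((k:ℝ)*x - ((k:ℝ)-1)*x)/2 = x/2 := by ring
  have h2 : ((k:ℝ)*x + ((k:ℝ)-1)*x)/2 = ((k:ℝ) - 1/2) * x := by ring
  rw [h1, h2]; ring

lemma ebasis_eq (k : ℕ) (x : ℝ) :
    Real.cos ((k:ℝ) * x) - Real.cos (((k:ℝ) + 1) * x)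
      = 2 * Real.sin (((k:ℝ) + 1/2) * x) * Real.sin (x/2) := by
  rw [Real.cos_sub_cos]
  have h1 : ((k:ℝ)*x + ((k:ℝ)+1)*x)/2 = ((k:ℝ) + 1/2) * x := by ring
  have h2 : ((k:ℝ)*x - ((k:ℝ)+1)*x)/2 = -(x/2) := by ring
  rw [h1, h2, Real.sin_neg]; ring

lemma integral_cos_cmul (c : ℝ) : (∫ x in (-π)..π, Real.cos (c*x)) =
    (if c = 0 then 2*π else 2 * Real.sin (c*π) / c) := by
  split_ifs with hc
  · simp [hc]; ring
  · rw [intervalIntegral.integral_comp_mul_left _ hc, integral_cos, mul_neg, Real.sin_neg,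
      smul_eq_mul]
    field_simp
    ring

lemma integral_cos_intmul (n : ℤ) (hn : n ≠ 0) : (∫ x in (-π)..π, Real.cos ((n:ℝ)*x)) = 0 := by
  rw [integral_cos_cmul]
  rw [if_neg (by exact_mod_cast hn)]
  rw [Real.sin_int_mul_pi]; simp

lemma integral_cos_mul_cos (a b : ℝ) : (∫ x in (-π)..π, Real.cos (a*x) * Real.cos (b*x)) =
    ((∫ x in (-π)..π, Real.cos ((a-b)*x)) + (∫ x in (-π)..π, Real.cos ((a+b)*x)))/2 := by
  have key : ∀ x : ℝ, Real.cos (a*x) * Real.cos (b*x)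
      = (Real.cos ((a-b)*x) + Real.cos ((a+b)*x))/2 := by
    intro x
    have h1 := Real.cos_sub (a*x) (b*x)
    have h2 := Real.cos_add (a*x) (b*x)
    have e1 : (a-b)*x = a*x - b*x := by ring
    have e2 : (a+b)*x = a*x + b*x := by ring
    rw [e1, e2, h1, h2]; ring
  rw [intervalIntegral.integral_congr (g := fun x => (Real.cos ((a-b)*x) + Real.cos ((a+b)*x))/2)
    (fun x _ => key x)]
  rw [intervalIntegral.integral_div, intervalIntegral.integral_add
    ((by fun_prop : Continuous fun x : ℝ => Real.cos ((a-b)*x)).intervalIntegrable _ _)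
    ((by fun_prop : Continuous fun x : ℝ => Real.cos ((a+b)*x)).intervalIntegrable _ _)]

lemma integral_sin_mul_sin (a b : ℝ) : (∫ x in (-π)..π, Real.sin (a*x) * Real.sin (b*x)) =
    ((∫ x in (-π)..π, Real.cos ((a-b)*x)) - (∫ x in (-π)..π, Real.cos ((a+b)*x)))/2 := by
  have key : ∀ x : ℝ, Real.sin (a*x) * Real.sin (b*x)
      = (Real.cos ((a-b)*x) - Real.cos ((a+b)*x))/2 := by
    intro x
    have h1 := Real.cos_sub (a*x) (b*x)
    have h2 := Real.cos_add (a*x) (b*x)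
    have e1 : (a-b)*x = a*x - b*x := by ring
    have e2 : (a+b)*x = a*x + b*x := by ring
    rw [e1, e2, h1, h2]; ring
  rw [intervalIntegral.integral_congr (g := fun x => (Real.cos ((a-b)*x) - Real.cos ((a+b)*x))/2)
    (fun x _ => key x)]
  rw [intervalIntegral.integral_div, intervalIntegral.integral_sub
    ((by fun_prop : Continuous fun x : ℝ => Real.cos ((a-b)*x)).intervalIntegrable _ _)
    ((by fun_prop : Continuous fun x : ℝ => Real.cos ((a+b)*x)).intervalIntegrable _ _)]

lemma ae_ne_zero : ∀ᵐ x : ℝ, x ≠ 0 := by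
  rw [ae_iff]
  simpa [not_not, Set.setOf_eq_eq_singleton] using Real.volume_singleton

lemma part1 (j k : ℕ) (hj : 1 ≤ j) (hk : 1 ≤ k) :
    (∫ x in (-π)..π, obasis j x * obasis k x * rho x) = if j = k then 1 else 0 := by
  have hππ : -π ≤ π := by linarith [pi_pos]
  have hcong : ∀ᵐ x : ℝ, x ∈ uIoc (-π) π → obasis j x * obasis k x * rho x
      = Real.cos (((j:ℝ)-1/2)*x) * Real.cos (((k:ℝ)-1/2)*x) / π := by
    filter_upwards [ae_ne_zero] with x hx0 hx
    rw [uIoc_of_le hππ] at hx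
    have hs := sinhalf_ne hx.1 hx.2 hx0
    simp only [obasis, rho, obasis_eq, one_sub_cos]
    field_simp
  rw [intervalIntegral.integral_congr_ae hcong, intervalIntegral.integral_div,
      integral_cos_mul_cos]
  by_cases h : j = k
  · subst h
    have e1 : ((j:ℝ)-1/2) - ((j:ℝ)-1/2) = (0:ℝ) := by ring
    have e2 : ((j:ℝ)-1/2) + ((j:ℝ)-1/2) = (((2*(j:ℤ) - 1 : ℤ)):ℝ) := by push_cast; ring
    rw [e1, e2, integral_cos_cmul, if_pos rfl, integral_cos_intmul _ (by omega), if_pos rfl]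
    field_simp
    ring
  · have e1 : ((j:ℝ)-1/2) - ((k:ℝ)-1/2) = (((j:ℤ) - k : ℤ):ℝ) := by push_cast; ring
    have e2 : ((j:ℝ)-1/2) + ((k:ℝ)-1/2) = (((j:ℤ) + k - 1 : ℤ):ℝ) := by push_cast; ring
    rw [e1, e2, integral_cos_intmul _ (by simp; omega), integral_cos_intmul _ (by omega), if_neg h]
    simp

lemma part3 (j k : ℕ) :
    (∫ x in (-π)..π, ebasis j x * ebasis k x * rho x) = if j = k then 1 else 0 := by
  have hππ : -π ≤ π := by linarith [pi_pos]
  have hcong : ∀ᵐ x : ℝ, x ∈ uIoc (-π) π → ebasis j x * ebasis k x * rho x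
      = Real.sin (((j:ℝ)+1/2)*x) * Real.sin (((k:ℝ)+1/2)*x) / π := by
    filter_upwards [ae_ne_zero] with x hx0 hx
    rw [uIoc_of_le hππ] at hx
    have hs := sinhalf_ne hx.1 hx.2 hx0
    simp only [ebasis, rho, ebasis_eq, one_sub_cos]
    field_simp
  rw [intervalIntegral.integral_congr_ae hcong, intervalIntegral.integral_div,
      integral_sin_mul_sin]
  by_cases h : j = k
  · subst h
    have e1 : ((j:ℝ)+1/2) - ((j:ℝ)+1/2) = (0:ℝ) := by ring
    have e2 : ((j:ℝ)+1/2) + ((j:ℝ)+1/2) = (((2*(j:ℤ) + 1 : ℤ)):ℝ) := by push_cast; ring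
    rw [e1, e2, integral_cos_cmul, if_pos rfl, integral_cos_intmul _ (by omega), if_pos rfl]
    field_simp
    ring
  · have e1 : ((j:ℝ)+1/2) - ((k:ℝ)+1/2) = (((j:ℤ) - k : ℤ):ℝ) := by push_cast; ring
    have e2 : ((j:ℝ)+1/2) + ((k:ℝ)+1/2) = (((j:ℤ) + k + 1 : ℤ):ℝ) := by push_cast; ring
    rw [e1, e2, integral_cos_intmul _ (by simp; omega), integral_cos_intmul _ (by omega), if_neg h]
    simp

lemma vanish (g : ℝ → ℝ) (hm : Measurable g)
    (hint : IntegrableOn (fun x => (g x)^2) (Ioo (-π) π))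
    (h : ∀ n : ℤ, (∫ x in (-π)..π, (g x : ℂ) * Complex.exp (Complex.I * x * ((n:ℂ) + 1/2))) = 0) :
    ∀ᵐ x ∂(volume.restrict (Ioo (-π) π)), g x = 0 := by
  haveI hT : Fact (0 < 2*π) := ⟨by positivity⟩
  have hb : -π + 2*π = π := by ring
  set F : ℝ → ℂ := fun x => (g x : ℂ) * Complex.exp (Complex.I * x / 2) with hF
  have hFm : Measurable F := by
    apply (Complex.measurable_ofReal.comp hm).mul
    fun_prop
  have hrs : volume.restrict (Ioo (-π) π) = volume.restrict (Ioc (-π) π) :=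
    Measure.restrict_congr_set Ioo_ae_eq_Ioc
  have hIoc : IntegrableOn (fun x => (g x)^2) (Ioc (-π) π) := by
    unfold IntegrableOn at hint ⊢
    rwa [hrs] at hint
  have hFL2 : MemLp F 2 (volume.restrict (Ioc (-π) π)) := by
    rw [memLp_two_iff_integrable_sq_norm hFm.aestronglyMeasurable]
    have hnorm : (fun x => ‖F x‖^2) = fun x => (g x)^2 := by
      funext x
      rw [hF]
      simp only [norm_mul, Complex.norm_real, Complex.norm_exp]
      have : (Complex.I * x / 2).re = 0 := by simp
      rw [this, Real.exp_zero, mul_one]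
      simp [Real.norm_eq_abs, sq_abs]
    rwa [hnorm]
  set G : AddCircle (2*π) → ℂ := AddCircle.liftIoc (2*π) (-π) F with hG
  have hGm : Measurable G :=
    (hFm.comp measurable_subtype_coe).comp (AddCircle.measurableEquivIoc (2*π) (-π)).measurable
  have hmap : Measure.map ((↑) : ℝ → AddCircle (2*π)) (volume.restrict (Ioc (-π) π)) = volume := by
    have := (AddCircle.measurePreserving_mk (2*π) (-π)).map_eq
    rwa [hb] at this
  have hcompae : (G ∘ ((↑) : ℝ → AddCircle (2*π))) =ᵐ[volume.restrict (Ioc (-π) π)] F := by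
    filter_upwards [ae_restrict_mem measurableSet_Ioc] with x hx
    have hx' : x ∈ Ioc (-π) (-π + 2*π) := by rwa [hb]
    exact AddCircle.liftIoc_coe_apply hx'
  have hGL2vol : MemLp G 2 (volume : Measure (AddCircle (2*π))) := by
    rw [← hmap, memLp_map_measure_iff hGm.aestronglyMeasurable
      (AddCircle.measurePreserving_mk (2*π) (-π)).measurable.aemeasurable]
    exact (memLp_congr_ae hcompae).2 hFL2
  have hGL2 : MemLp G 2 (@AddCircle.haarAddCircle (2*π) hT) := by
    have h1 : (AddCircle.haarAddCircle : Measure (AddCircle (2*π)))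
        = (ENNReal.ofReal (2*π))⁻¹ • (volume : Measure (AddCircle (2*π))) := by
      rw [AddCircle.volume_eq_smul_haarAddCircle, ← smul_assoc, smul_eq_mul,
        ENNReal.inv_mul_cancel (ENNReal.ofReal_pos.2 (by positivity)).ne' ENNReal.ofReal_ne_top,
        one_smul]
    rw [h1]
    exact hGL2vol.smul_measure (by simp [Real.pi_pos])
  set L : Lp ℂ 2 (@AddCircle.haarAddCircle (2*π) hT) := hGL2.toLp G with hL
  have hcoeffG : ∀ n : ℤ, fourierCoeff G n = 0 := by
    intro n
    rw [fourierCoeff_eq_intervalIntegral G n (-π), hb]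
    have hπ : ((π:ℝ):ℂ) ≠ 0 := Complex.ofReal_ne_zero.2 Real.pi_ne_zero
    have hint' : (∫ x in (-π)..π, (fourier (-n) ((x:ℝ) : AddCircle (2*π))) • G x)
        = ∫ x in (-π)..π, (g x : ℂ) * Complex.exp (Complex.I * x * (((-n : ℤ) : ℂ) + 1/2)) := by
      apply intervalIntegral.integral_congr_ae
      apply MeasureTheory.ae_of_all
      intro x hx
      rw [uIoc_of_le (by linarith [Real.pi_pos] : -π ≤ π)] at hx
      have hx' : x ∈ Ioc (-π) (-π + 2*π) := by rwa [hb]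
      rw [smul_eq_mul,
        show G ((x : ℝ) : AddCircle (2*π)) = F x from AddCircle.liftIoc_coe_apply hx',
        fourier_coe_apply]
      have e : Complex.exp (2 * (π:ℝ) * Complex.I * ((-n : ℤ):ℂ) * (x:ℝ) / ((2 * π : ℝ):ℂ))
          * Complex.exp (Complex.I * (x:ℝ) / 2)
          = Complex.exp (Complex.I * (x:ℝ) * (((-n : ℤ) : ℂ) + 1/2)) := by
        rw [← Complex.exp_add]
        congr 1
        push_cast
        field_simp
      calc Complex.exp (2 * (π:ℝ) * Complex.I * ((-n : ℤ):ℂ) * (x:ℝ) / ((2 * π : ℝ):ℂ)) * F x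
          = (g x : ℂ) * (Complex.exp (2 * (π:ℝ) * Complex.I * ((-n : ℤ):ℂ) * (x:ℝ) / ((2 * π : ℝ):ℂ))
            * Complex.exp (Complex.I * (x:ℝ) / 2)) := by rw [hF]; ring
        _ = (g x : ℂ) * Complex.exp (Complex.I * (x:ℝ) * (((-n : ℤ) : ℂ) + 1/2)) := by rw [e]
    rw [hint', h (-n)]
    simp
  have hL0 : L = 0 := by
    have hrepr : ∀ n : ℤ, fourierBasis.repr L n = 0 := by
      intro n
      rw [fourierBasis_repr]
      have hcc : fourierCoeff (⇑L) n = fourierCoeff G n := by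
        unfold fourierCoeff
        refine integral_congr_ae ?_
        filter_upwards [hGL2.coeFn_toLp] with t ht
        rw [ht]
      rw [hcc, hcoeffG]
    have hr0 : fourierBasis.repr L = 0 := lp.ext (funext hrepr)
    exact (LinearIsometryEquiv.map_eq_zero_iff _).1 hr0
  have hhaar0 : G =ᵐ[@AddCircle.haarAddCircle (2*π) hT] 0 := by
    have h1 : ⇑L =ᵐ[@AddCircle.haarAddCircle (2*π) hT] G := hGL2.coeFn_toLp
    have h2 : ⇑L =ᵐ[@AddCircle.haarAddCircle (2*π) hT] (0 : AddCircle (2*π) → ℂ) := by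
      rw [hL0]
      exact Lp.coeFn_zero _ _ _
    exact h1.symm.trans h2
  have hvol0 : G =ᵐ[(volume : Measure (AddCircle (2*π)))] 0 := by
    rw [AddCircle.volume_eq_smul_haarAddCircle]
    exact Measure.ae_smul_measure hhaar0 _
  have hpull : F =ᵐ[volume.restrict (Ioc (-π) π)] 0 := by
    have h3 : (G ∘ ((↑) : ℝ → AddCircle (2*π)))
        =ᵐ[volume.restrict (Ioc (-π) π)] ((0 : AddCircle (2*π) → ℂ) ∘ ((↑) : ℝ → AddCircle (2*π))) := by
      apply ae_eq_comp ((AddCircle.measurePreserving_mk (2*π) (-π)).measurable.aemeasurable)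
      rwa [hmap]
    exact hcompae.symm.trans (h3.trans (Filter.EventuallyEq.refl _ _))
  have hg0 : ∀ᵐ x ∂volume.restrict (Ioc (-π) π), g x = 0 := by
    filter_upwards [hpull] with x hx
    simp only [hF, Pi.zero_apply] at hx
    rcases mul_eq_zero.1 hx with h' | h'
    · exact_mod_cast h'
    · exact absurd h' (Complex.exp_ne_zero _)
  rw [hrs]
  exact hg0

lemma odd_int (u : ℝ → ℝ) (hu : ∀ x, u (-x) = -u x) : (∫ x in (-π)..π, u x) = 0 := by
  have h1 := intervalIntegral.integral_comp_neg (a := -π) (b := π) (f := u)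
  simp only [hu, intervalIntegral.integral_neg, neg_neg] at h1
  linarith

lemma complex_split (g : ℝ → ℝ) (hgi : IntervalIntegrable g volume (-π) π) (c : ℝ) :
    (∫ x in (-π)..π, (g x : ℂ) * Complex.exp (Complex.I * x * (c:ℂ)))
      = (((∫ x in (-π)..π, g x * Real.cos (c*x)) : ℝ) : ℂ)
        + (((∫ x in (-π)..π, g x * Real.sin (c*x)) : ℝ) : ℂ) * Complex.I := by
  have key : ∀ x : ℝ, (g x : ℂ) * Complex.exp (Complex.I * x * (c:ℂ))
      = ((g x * Real.cos (c*x) : ℝ) : ℂ) + ((g x * Real.sin (c*x) : ℝ) : ℂ) * Complex.I := by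
    intro x
    rw [show Complex.I * x * (c:ℂ) = ((c*x : ℝ):ℂ) * Complex.I by push_cast; ring,
      Complex.exp_mul_I]
    push_cast
    ring
  rw [intervalIntegral.integral_congr (fun x _ => key x)]
  have hgc : IntervalIntegrable (fun x => g x * Real.cos (c*x)) volume (-π) π :=
    hgi.mul_continuousOn (by fun_prop)
  have hgs : IntervalIntegrable (fun x => g x * Real.sin (c*x)) volume (-π) π :=
    hgi.mul_continuousOn (by fun_prop)
  have hgc' : IntervalIntegrable (fun x => ((g x * Real.cos (c*x) : ℝ) : ℂ)) volume (-π) π := by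
    rw [intervalIntegrable_iff] at hgc ⊢
    exact hgc.ofReal
  have hgs' : IntervalIntegrable (fun x => ((g x * Real.sin (c*x) : ℝ) : ℂ) * Complex.I) volume (-π) π := by
    rw [intervalIntegrable_iff] at hgs ⊢
    exact (hgs.ofReal (𝕜 := ℂ)).mul_const _
  rw [intervalIntegral.integral_add hgc' hgs', intervalIntegral.integral_mul_const,
    intervalIntegral.integral_ofReal, intervalIntegral.integral_ofReal]

lemma part2 (f : ℝ → ℝ) (hm : Measurable f) (hodd : ∀ x, f (-x) = -(f x))
    (hint : IntegrableOn (fun x => (f x)^2 * rho x) (Ioo (-π) π))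
    (horth : ∀ k : ℕ, 1 ≤ k → (∫ x in (-π)..π, f x * obasis k x * rho x) = 0) :
    ∀ᵐ x ∂(volume.restrict (Ioo (-π) π)), f x = 0 := by
  have hππ : -π ≤ π := by linarith [pi_pos]
  set g : ℝ → ℝ := fun x => f x / (2 * Real.sin (x/2)) with hg
  have hgm : Measurable g := hm.div (by fun_prop)
  have hgsq : IntegrableOn (fun x => (g x)^2) (Ioo (-π) π) := by
    have h1 : IntegrableOn (fun x => π * ((f x)^2 * rho x)) (Ioo (-π) π) := hint.const_mul π
    apply h1.congr_fun _ measurableSet_Ioo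
    intro x hx
    by_cases hx0 : x = 0
    · simp [hg, hx0, rho]
    · have hs := sinhalf_ne hx.1 hx.2.le hx0
      simp only [hg, rho, one_sub_cos]
      field_simp
  have hgsqIoc : IntegrableOn (fun x => (g x)^2) (Ioc (-π) π) := by
    unfold IntegrableOn at hgsq ⊢
    rwa [Measure.restrict_congr_set Ioo_ae_eq_Ioc] at hgsq
  haveI : IsFiniteMeasure (volume.restrict (Ioc (-π) π)) :=
    ⟨by rw [Measure.restrict_apply_univ]; exact measure_Ioc_lt_top⟩
  have hgint : IntervalIntegrable g volume (-π) π := by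
    rw [intervalIntegrable_iff, uIoc_of_le hππ]
    exact ((memLp_two_iff_integrable_sq hgm.aestronglyMeasurable).2 hgsqIoc).integrable
      (by norm_num)
  have hgeven : ∀ x, g (-x) = g x := by
    intro x
    simp only [hg, hodd x, show (-x)/2 = -(x/2) by ring, Real.sin_neg, mul_neg, neg_div_neg_eq]
  have hcos : ∀ k : ℕ, 1 ≤ k → (∫ x in (-π)..π, g x * Real.cos (((k:ℝ) - 1/2) * x)) = 0 := by
    intro k hk
    have h0 := horth k hk
    have hcg : ∀ᵐ x : ℝ, x ∈ uIoc (-π) π → f x * obasis k x * rho x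
        = g x * Real.cos (((k:ℝ)-1/2)*x) / π := by
      filter_upwards [ae_ne_zero] with x hx0 hx
      rw [uIoc_of_le hππ] at hx
      have hs := sinhalf_ne hx.1 hx.2 hx0
      simp only [hg, obasis, rho, obasis_eq, one_sub_cos]
      field_simp
    rw [intervalIntegral.integral_congr_ae hcg, intervalIntegral.integral_div] at h0
    exact (div_eq_zero_iff.1 h0).resolve_right Real.pi_ne_zero
  have hvan := vanish g hgm hgsq ?_
  · filter_upwards [hvan, ae_restrict_mem measurableSet_Ioo,
      Filter.Eventually.filter_mono (ae_mono Measure.restrict_le_self) ae_ne_zero]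
      with x hgx hx hx0
    have hs := sinhalf_ne hx.1 hx.2.le hx0
    have : f x / (2 * Real.sin (x/2)) = 0 := hgx
    rcases div_eq_zero_iff.1 this with h' | h'
    · exact h'
    · exact absurd h' (by positivity)
  · intro n
    have hc := complex_split g hgint ((n:ℝ)+1/2)
    rw [show ((((n:ℝ)+1/2 : ℝ)):ℂ) = ((n:ℂ)+1/2) by push_cast; ring] at hc
    rw [hc]
    have hsin0 : (∫ x in (-π)..π, g x * Real.sin (((n:ℝ)+1/2)*x)) = 0 := by
      apply odd_int
      intro x
      rw [hgeven x, show ((n:ℝ)+1/2)*(-x) = -(((n:ℝ)+1/2)*x) by ring, Real.sin_neg, mul_neg]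
    have hcos0 : (∫ x in (-π)..π, g x * Real.cos (((n:ℝ)+1/2)*x)) = 0 := by
      rcases le_or_gt 0 n with hn | hn
      · have h1 := hcos (n.toNat + 1) (by omega)
        have hcast : ((n.toNat:ℕ):ℝ) = (n:ℝ) := by exact_mod_cast Int.toNat_of_nonneg hn
        rw [show (((n.toNat + 1 : ℕ)):ℝ) - 1/2 = ((n:ℝ)+1/2) by push_cast [hcast]; ring] at h1
        exact h1
      · have h1 := hcos ((-n).toNat) (by omega)
        have hcast : (((-n).toNat:ℕ):ℝ) = -(n:ℝ) := by
          exact_mod_cast Int.toNat_of_nonneg (by omega : (0:ℤ) ≤ -n)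
        rw [show ((((-n).toNat : ℕ)):ℝ) - 1/2 = -((n:ℝ)+1/2) by push_cast [hcast]; ring] at h1
        simp_rw [neg_mul, Real.cos_neg] at h1
        exact h1
    rw [hsin0, hcos0]
    simp

lemma part4 (f : ℝ → ℝ) (hm : Measurable f) (heven : ∀ x, f (-x) = f x)
    (hint : IntegrableOn (fun x => (f x)^2 * rho x) (Ioo (-π) π))
    (horth : ∀ k : ℕ, (∫ x in (-π)..π, f x * ebasis k x * rho x) = 0) :
    ∀ᵐ x ∂(volume.restrict (Ioo (-π) π)), f x = 0 := by
  have hππ : -π ≤ π := by linarith [pi_pos]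
  set g : ℝ → ℝ := fun x => f x / (2 * Real.sin (x/2)) with hg
  have hgm : Measurable g := hm.div (by fun_prop)
  have hgsq : IntegrableOn (fun x => (g x)^2) (Ioo (-π) π) := by
    have h1 : IntegrableOn (fun x => π * ((f x)^2 * rho x)) (Ioo (-π) π) := hint.const_mul π
    apply h1.congr_fun _ measurableSet_Ioo
    intro x hx
    by_cases hx0 : x = 0
    · simp [hg, hx0, rho]
    · have hs := sinhalf_ne hx.1 hx.2.le hx0
      simp only [hg, rho, one_sub_cos]
      field_simp
  have hgsqIoc : IntegrableOn (fun x => (g x)^2) (Ioc (-π) π) := by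
    unfold IntegrableOn at hgsq ⊢
    rwa [Measure.restrict_congr_set Ioo_ae_eq_Ioc] at hgsq
  haveI : IsFiniteMeasure (volume.restrict (Ioc (-π) π)) :=
    ⟨by rw [Measure.restrict_apply_univ]; exact measure_Ioc_lt_top⟩
  have hgint : IntervalIntegrable g volume (-π) π := by
    rw [intervalIntegrable_iff, uIoc_of_le hππ]
    exact ((memLp_two_iff_integrable_sq hgm.aestronglyMeasurable).2 hgsqIoc).integrable
      (by norm_num)
  have hgodd : ∀ x, g (-x) = -(g x) := by
    intro x
    simp only [hg, heven x, show (-x)/2 = -(x/2) by ring, Real.sin_neg, mul_neg, div_neg]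
  have hsin : ∀ k : ℕ, (∫ x in (-π)..π, g x * Real.sin (((k:ℝ) + 1/2) * x)) = 0 := by
    intro k
    have h0 := horth k
    have hcg : ∀ᵐ x : ℝ, x ∈ uIoc (-π) π → f x * ebasis k x * rho x
        = g x * Real.sin (((k:ℝ)+1/2)*x) / π := by
      filter_upwards [ae_ne_zero] with x hx0 hx
      rw [uIoc_of_le hππ] at hx
      have hs := sinhalf_ne hx.1 hx.2 hx0
      simp only [hg, ebasis, rho, ebasis_eq, one_sub_cos]
      field_simp
    rw [intervalIntegral.integral_congr_ae hcg, intervalIntegral.integral_div] at h0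
    exact (div_eq_zero_iff.1 h0).resolve_right Real.pi_ne_zero
  have hvan := vanish g hgm hgsq ?_
  · filter_upwards [hvan, ae_restrict_mem measurableSet_Ioo,
      Filter.Eventually.filter_mono (ae_mono Measure.restrict_le_self) ae_ne_zero]
      with x hgx hx hx0
    have hs := sinhalf_ne hx.1 hx.2.le hx0
    have : f x / (2 * Real.sin (x/2)) = 0 := hgx
    rcases div_eq_zero_iff.1 this with h' | h'
    · exact h'
    · exact absurd h' (by positivity)
  · intro n
    have hc := complex_split g hgint ((n:ℝ)+1/2)
    rw [show ((((n:ℝ)+1/2 : ℝ)):ℂ) = ((n:ℂ)+1/2) by push_cast; ring] at hc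
    rw [hc]
    have hcos0 : (∫ x in (-π)..π, g x * Real.cos (((n:ℝ)+1/2)*x)) = 0 := by
      apply odd_int
      intro x
      rw [hgodd x, show ((n:ℝ)+1/2)*(-x) = -(((n:ℝ)+1/2)*x) by ring, Real.cos_neg, neg_mul]
    have hsin0 : (∫ x in (-π)..π, g x * Real.sin (((n:ℝ)+1/2)*x)) = 0 := by
      rcases le_or_gt 0 n with hn | hn
      · have h1 := hsin n.toNat
        have hcast : ((n.toNat:ℕ):ℝ) = (n:ℝ) := by exact_mod_cast Int.toNat_of_nonneg hn
        rw [show (((n.toNat : ℕ)):ℝ) + 1/2 = ((n:ℝ)+1/2) by push_cast [hcast]; ring] at h1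
        exact h1
      · have h1 := hsin ((-(n+1)).toNat)
        have hcast : (((-(n+1)).toNat:ℕ):ℝ) = -(n:ℝ) - 1 := by
          have := Int.toNat_of_nonneg (by omega : (0:ℤ) ≤ -(n+1))
          have h2 : (((-(n+1)).toNat:ℤ):ℝ) = ((-(n+1) : ℤ):ℝ) := by exact_mod_cast this
          push_cast at h2
          linarith
        rw [show ((((-(n+1)).toNat : ℕ)):ℝ) + 1/2 = -((n:ℝ)+1/2) by push_cast [hcast]; ring] at h1
        simp_rw [neg_mul, Real.sin_neg, mul_neg] at h1
        rw [intervalIntegral.integral_neg, neg_eq_zero] at h1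
        exact h1
    rw [hsin0, hcos0]
    simp

/-- The families `o^k` (k ≥ 1) and `e^k` (k ≥ 0) are orthonormal in `L²((−π,π), ρ dx)`
and total in, respectively, the odd and even parts of that space: any odd
(resp. even) function that is square-integrable against `ρ` and orthogonal to all
`o^k` (resp. `e^k`) vanishes almost everywhere on `(−π, π)`. -/
theorem stmt6 :
    (∀ j k : ℕ, 1 ≤ j → 1 ≤ k →
      (∫ x in (-π)..π, obasis j x * obasis k x * rho x) = if j = k then 1 else 0) ∧
    (∀ f : ℝ → ℝ, Measurable f → (∀ x, f (-x) = -(f x)) →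
      IntegrableOn (fun x => (f x)^2 * rho x) (Ioo (-π) π) →
      (∀ k : ℕ, 1 ≤ k → (∫ x in (-π)..π, f x * obasis k x * rho x) = 0) →
      ∀ᵐ x ∂(volume.restrict (Ioo (-π) π)), f x = 0) ∧
    (∀ j k : ℕ,
      (∫ x in (-π)..π, ebasis j x * ebasis k x * rho x) = if j = k then 1 else 0) ∧
    (∀ f : ℝ → ℝ, Measurable f → (∀ x, f (-x) = f x) →
      IntegrableOn (fun x => (f x)^2 * rho x) (Ioo (-π) π) →
      (∀ k : ℕ, (∫ x in (-π)..π, f x * ebasis k x * rho x) = 0) →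
      ∀ᵐ x ∂(volume.restrict (Ioo (-π) π)), f x = 0) := by
  exact ⟨part1, part2, part3, part4⟩
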